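/- Let Θ̂_1, ..., Θ̂_k be positive definite matrices of sizes d_a×d_a with Θ̂_a = exp((H₀/k)·I_{d_a} + √(d_a)·H_a) where H₀ ∈ ℝ, each H_a is symmetric traceless, and H₀² + Σ_a ‖H_a‖_F² ≤ δ² with δ ≤ 1/√(max_a d_a). Then for each a, ‖I_{d_a} − Θ̂_a‖_F ≤ 2√(d_a)·δ, and the Kronecker product satisfies ‖I_D − Θ̂_1 ⊗ ··· ⊗ Θ̂_k‖_F ≤ 2k√D · δ · e^{2kδ}, where D = d₁···d_k. -/

import Mathlib

open Matrix

/-- The Frobenius norm of a real matrix. -/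
noncomputable def frobeniusNorm {m n : Type*} [Fintype m] [Fintype n]
    (A : Matrix m n ℝ) : ℝ :=
  Real.sqrt (∑ i, ∑ j, (A i j) ^ 2)

/-- The Kronecker product `Θ₁ ⊗ ⋯ ⊗ Θ_k` of the matrices `Θ a`, realized as a
matrix on the tensor product index `(a : Fin k) → Fin (d a)`. -/
def kron {k : ℕ} (d : Fin k → ℕ)
    (Θ : (a : Fin k) → Matrix (Fin (d a)) (Fin (d a)) ℝ) :
    Matrix ((a : Fin k) → Fin (d a)) ((a : Fin k) → Fin (d a)) ℝ :=
  Matrix.of fun x y => ∏ a, Θ a (x a) (y a)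

section Stmt8Aux

attribute [local instance] Matrix.frobeniusSeminormedAddCommGroup
  Matrix.frobeniusNormedAddCommGroup Matrix.frobeniusNormedSpace
  Matrix.frobeniusNormedRing Matrix.frobeniusNormedAlgebra

/-- frobeniusNorm agrees with the frobenius-norm instance. -/
lemma stmt8_frob_eq {m n : Type*} [Fintype m] [Fintype n] (A : Matrix m n ℝ) :
    frobeniusNorm A = ‖A‖ := by
  rw [Matrix.frobenius_norm_def, frobeniusNorm, Real.sqrt_eq_rpow]
  congr 1
  refine Finset.sum_congr rfl fun i _ => Finset.sum_congr rfl fun j _ => ?_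
  rw [Real.norm_eq_abs, Real.rpow_two, sq_abs]

lemma stmt8_norm_exp_sub_one_le {𝔸 : Type*} [NormedRing 𝔸] [NormedAlgebra ℝ 𝔸]
    [CompleteSpace 𝔸] (x : 𝔸) :
    ‖NormedSpace.exp x - 1‖ ≤ Real.exp ‖x‖ - 1 := by
  have h := NormedSpace.exp_series_hasSum_exp' (𝕂 := ℝ) x
  have h1 : HasSum (fun n : ℕ => ((Nat.factorial (n + 1) : ℝ))⁻¹ • x ^ (n + 1))
      (NormedSpace.exp x - 1) := by
    simpa using (hasSum_nat_add_iff' (f := fun n : ℕ => ((Nat.factorial n : ℝ))⁻¹ • x ^ n) 1).mpr h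
  have hr := NormedSpace.exp_series_hasSum_exp' (𝕂 := ℝ) (‖x‖ : ℝ)
  have h2 : HasSum (fun n : ℕ => ((Nat.factorial (n + 1) : ℝ))⁻¹ * ‖x‖ ^ (n + 1))
      (Real.exp ‖x‖ - 1) := by
    have := (hasSum_nat_add_iff' (f := fun n : ℕ => ((Nat.factorial n : ℝ))⁻¹ * ‖x‖ ^ n) 1).mpr
      (by simpa [smul_eq_mul] using hr)
    simpa [Real.exp_eq_exp_ℝ] using this
  have hle : ∀ n : ℕ, ‖((Nat.factorial (n + 1) : ℝ))⁻¹ • x ^ (n + 1)‖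
      ≤ ((Nat.factorial (n + 1) : ℝ))⁻¹ * ‖x‖ ^ (n + 1) := by
    intro n
    rw [norm_smul, Real.norm_eq_abs, abs_of_nonneg (by positivity)]
    exact mul_le_mul_of_nonneg_left (norm_pow_le' x n.succ_pos) (by positivity)
  have hsum : Summable fun n : ℕ => ‖((Nat.factorial (n + 1) : ℝ))⁻¹ • x ^ (n + 1)‖ :=
    Summable.of_nonneg_of_le (fun _ => norm_nonneg _) hle h2.summable
  calc ‖NormedSpace.exp x - 1‖ = ‖∑' n : ℕ, ((Nat.factorial (n + 1) : ℝ))⁻¹ • x ^ (n + 1)‖ := by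
        rw [h1.tsum_eq]
    _ ≤ ∑' n : ℕ, ‖((Nat.factorial (n + 1) : ℝ))⁻¹ • x ^ (n + 1)‖ := norm_tsum_le_tsum_norm hsum
    _ ≤ ∑' n : ℕ, ((Nat.factorial (n + 1) : ℝ))⁻¹ * ‖x‖ ^ (n + 1) :=
        Summable.tsum_le_tsum hle hsum h2.summable
    _ = Real.exp ‖x‖ - 1 := h2.tsum_eq

lemma stmt8_exp_sub_one_le {t : ℝ} (h0 : 0 ≤ t) (h1 : t ≤ 1) :
    Real.exp t - 1 ≤ 2 * t := by
  have hconv := convexOn_exp.2 (Set.mem_univ (0 : ℝ)) (Set.mem_univ (1 : ℝ))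
    (by linarith : (0:ℝ) ≤ 1 - t) h0 (by ring)
  simp only [smul_eq_mul, mul_zero, mul_one, zero_add, Real.exp_zero] at hconv
  have he : Real.exp 1 < 2.7182818286 := Real.exp_one_lt_d9
  nlinarith

section Kron

variable {k : ℕ} {d : Fin k → ℕ}

lemma stmt8_kron_mul (Θ Ψ : ∀ a, Matrix (Fin (d a)) (Fin (d a)) ℝ) :
    kron d Θ * kron d Ψ = kron d fun a => Θ a * Ψ a := by
  ext x y
  show ∑ z : ∀ a, Fin (d a), (∏ a, Θ a (x a) (z a)) * ∏ a, Ψ a (z a) (y a)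
      = ∏ a, ∑ j, Θ a (x a) j * Ψ a j (y a)
  rw [Fintype.prod_sum (f := fun a j => Θ a (x a) j * Ψ a j (y a))]
  exact Finset.sum_congr rfl fun z _ => (Finset.prod_mul_distrib).symm

lemma stmt8_kron_one : kron d (fun _ => 1) = (1 : Matrix _ _ ℝ) := by
  ext x y
  show (∏ a, (1 : Matrix (Fin (d a)) (Fin (d a)) ℝ) (x a) (y a)) = (1 : Matrix _ _ ℝ) x y
  simp only [Matrix.one_apply, Fintype.prod_boole]
  simp [funext_iff]

lemma stmt8_kron_update_add (P : ∀ a, Matrix (Fin (d a)) (Fin (d a)) ℝ) (a : Fin k)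
    (M N : Matrix (Fin (d a)) (Fin (d a)) ℝ) :
    kron d (Function.update P a (M + N))
      = kron d (Function.update P a M) + kron d (Function.update P a N) := by
  ext x y
  show (∏ b, Function.update P a (M + N) b (x b) (y b))
      = (∏ b, Function.update P a M b (x b) (y b)) + ∏ b, Function.update P a N b (x b) (y b)
  rw [← Finset.mul_prod_erase _ _ (Finset.mem_univ a),
    ← Finset.mul_prod_erase _ _ (Finset.mem_univ a),
    ← Finset.mul_prod_erase _ _ (Finset.mem_univ a)]
  have hrest : ∀ Q : Matrix (Fin (d a)) (Fin (d a)) ℝ,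
      (∏ b ∈ Finset.univ.erase a, Function.update P a Q b (x b) (y b))
        = ∏ b ∈ Finset.univ.erase a, P b (x b) (y b) := fun Q =>
    Finset.prod_congr rfl fun b hb => by
      rw [Function.update_of_ne (Finset.ne_of_mem_erase hb)]
  rw [hrest, hrest, hrest, Function.update_self, Function.update_self, Function.update_self,
    Matrix.add_apply, add_mul]

lemma stmt8_sqrt_prod {ι : Type*} (s : Finset ι) (f : ι → ℝ) (h : ∀ i ∈ s, 0 ≤ f i) :
    Real.sqrt (∏ i ∈ s, f i) = ∏ i ∈ s, Real.sqrt (f i) := by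
  induction s using Finset.cons_induction with
  | empty => simp
  | cons a s ha ih =>
    rw [Finset.prod_cons, Finset.prod_cons, Real.sqrt_mul (h a (Finset.mem_cons_self a s)),
      ih fun i hi => h i (Finset.mem_cons_of_mem hi)]

lemma stmt8_norm_kron (M : ∀ a, Matrix (Fin (d a)) (Fin (d a)) ℝ) :
    ‖kron d M‖ = ∏ a, ‖M a‖ := by
  have key : ∀ (g : ∀ a, Fin (d a) → ℝ),
      (∑ z : ∀ a, Fin (d a), ∏ a, g a (z a)) = ∏ a, ∑ j, g a j := fun g =>
    (Fintype.prod_sum (f := fun a j => g a j)).symm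
  rw [← stmt8_frob_eq]
  simp_rw [← stmt8_frob_eq, frobeniusNorm]
  rw [← stmt8_sqrt_prod _ _ fun i _ => by positivity]
  congr 1
  calc ∑ x : ∀ a, Fin (d a), ∑ y : ∀ a, Fin (d a), (kron d M x y) ^ 2
      = ∑ x : ∀ a, Fin (d a), ∑ y : ∀ a, Fin (d a), ∏ a, (M a (x a) (y a)) ^ 2 := by
        refine Finset.sum_congr rfl fun x _ => Finset.sum_congr rfl fun y _ => ?_
        show (∏ a, M a (x a) (y a)) ^ 2 = _
        rw [← Finset.prod_pow]
    _ = ∑ x : ∀ a, Fin (d a), ∏ a, ∑ j, (M a (x a) j) ^ 2 := by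
        refine Finset.sum_congr rfl fun x _ => ?_
        exact key fun a j => (M a (x a) j) ^ 2
    _ = ∏ a, ∑ i, ∑ j, (M a i j) ^ 2 := key fun a i => ∑ j, (M a i j) ^ 2

lemma stmt8_norm_one {n : ℕ} : ‖(1 : Matrix (Fin n) (Fin n) ℝ)‖ = Real.sqrt n := by
  rw [← stmt8_frob_eq, frobeniusNorm]
  congr 1
  have : ∀ i j : Fin n, ((1 : Matrix (Fin n) (Fin n) ℝ) i j) ^ 2
      = if j = i then (1:ℝ) else 0 := by
    intro i j
    by_cases h : i = j <;> simp [Matrix.one_apply, h, eq_comm]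
  simp_rw [this]
  simp

end Kron

lemma stmt8_frob_one {n : ℕ} :
    frobeniusNorm (1 : Matrix (Fin n) (Fin n) ℝ) = Real.sqrt n := by
  rw [stmt8_frob_eq, stmt8_norm_one]

lemma stmt8_frob_kron {k : ℕ} {d : Fin k → ℕ}
    (M : ∀ a, Matrix (Fin (d a)) (Fin (d a)) ℝ) :
    frobeniusNorm (kron d M) = ∏ a, frobeniusNorm (M a) := by
  simp_rw [stmt8_frob_eq]
  exact stmt8_norm_kron M

lemma stmt8_frob_triangle {n : Type*} [Fintype n] (A B : Matrix n n ℝ) :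
    frobeniusNorm (A + B) ≤ frobeniusNorm A + frobeniusNorm B := by
  rw [stmt8_frob_eq, stmt8_frob_eq, stmt8_frob_eq]
  exact norm_add_le _ _

lemma stmt8_frob_sub_rev {n : Type*} [Fintype n] (A B : Matrix n n ℝ) :
    frobeniusNorm (A - B) = frobeniusNorm (B - A) := by
  rw [stmt8_frob_eq, stmt8_frob_eq]
  exact norm_sub_rev _ _

lemma stmt8_frob_nonneg {m n : Type*} [Fintype m] [Fintype n] (A : Matrix m n ℝ) :
    0 ≤ frobeniusNorm A := Real.sqrt_nonneg _

lemma stmt8_main1 {n : ℕ} (A : Matrix (Fin n) (Fin n) ℝ)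
    (hA : frobeniusNorm A ≤ 1) :
    frobeniusNorm (1 - NormedSpace.exp A) ≤ 2 * frobeniusNorm A := by
  simp only [stmt8_frob_eq] at hA ⊢
  rw [norm_sub_rev]
  calc ‖NormedSpace.exp A - 1‖ ≤ Real.exp ‖A‖ - 1 := stmt8_norm_exp_sub_one_le A
    _ ≤ 2 * ‖A‖ := stmt8_exp_sub_one_le (norm_nonneg A) hA

end Stmt8Aux

/-- If `Θ̂_a = exp((H₀/k)·I + √(d_a)·H_a)` with each `H_a` symmetric
traceless, `H₀² + Σ_a ‖H_a‖_F² ≤ δ²` and `0 ≤ δ ≤ 1/√(d_a)` for every `a` (i.e.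
`δ ≤ 1/√(max_a d_a)`), then `‖I - Θ̂_a‖_F ≤ 2 √(d_a) δ` for each `a`, and
`‖I_D - Θ̂_1 ⊗ ⋯ ⊗ Θ̂_k‖_F ≤ 2 k √D δ e^{2kδ}` where `D = d₁⋯d_k`. -/
theorem stmt8 {k : ℕ} (hk : 0 < k) (d : Fin k → ℕ) (H0 : ℝ)
    (H : (a : Fin k) → Matrix (Fin (d a)) (Fin (d a)) ℝ)
    (hsym : ∀ a, (H a)ᵀ = H a) (htr : ∀ a, (H a).trace = 0)
    (δ : ℝ) (hδ0 : 0 ≤ δ)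
    (hnorm : H0 ^ 2 + ∑ a, (frobeniusNorm (H a)) ^ 2 ≤ δ ^ 2)
    (hδ : ∀ a, δ ≤ 1 / Real.sqrt (d a))
    (Θhat : (a : Fin k) → Matrix (Fin (d a)) (Fin (d a)) ℝ)
    (hΘ : ∀ a, Θhat a =
      NormedSpace.exp ((H0 / k) • (1 : Matrix (Fin (d a)) (Fin (d a)) ℝ)
        + Real.sqrt (d a) • H a)) :
    (∀ a, frobeniusNorm (1 - Θhat a) ≤ 2 * Real.sqrt (d a) * δ) ∧
      frobeniusNorm (1 - kron d Θhat)
        ≤ 2 * k * Real.sqrt ((∏ a, d a : ℕ) : ℝ) * δ * Real.exp (2 * k * δ) := by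
  classical
  -- bound on the exponent matrices
  have hXfrob : ∀ a, frobeniusNorm ((H0 / k) • (1 : Matrix (Fin (d a)) (Fin (d a)) ℝ)
      + Real.sqrt (d a) • H a) ≤ Real.sqrt (d a) * δ := by
    intro a
    set X := (H0 / k) • (1 : Matrix (Fin (d a)) (Fin (d a)) ℝ) + Real.sqrt (d a) • H a with hX
    have hXentry : ∀ i j, X i j = (H0 / k) * (1 : Matrix (Fin (d a)) (Fin (d a)) ℝ) i j
        + Real.sqrt (d a) * H a i j := by
      intro i j
      simp [hX, Matrix.add_apply, smul_eq_mul]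
    have hone2 : (∑ i, ∑ j, ((1 : Matrix (Fin (d a)) (Fin (d a)) ℝ) i j) ^ 2) = (d a : ℝ) := by
      have h1 : ∀ i j : Fin (d a), ((1 : Matrix (Fin (d a)) (Fin (d a)) ℝ) i j) ^ 2
          = if j = i then (1:ℝ) else 0 := by
        intro i j
        by_cases h : i = j <;> simp [Matrix.one_apply, h, eq_comm]
      simp_rw [h1]
      simp
    have hcross : (∑ i, ∑ j, (1 : Matrix (Fin (d a)) (Fin (d a)) ℝ) i j * H a i j) = 0 := by
      have h1 : ∀ i j : Fin (d a), (1 : Matrix (Fin (d a)) (Fin (d a)) ℝ) i j * H a i j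
          = if j = i then H a i j else 0 := by
        intro i j
        by_cases h : i = j <;> simp [Matrix.one_apply, h, eq_comm]
      simp_rw [h1]
      simp only [Finset.sum_ite_eq', Finset.mem_univ, if_true]
      simpa [Matrix.trace, Matrix.diag] using htr a
    have hexp : ∀ i j, (X i j) ^ 2
        = (H0 / k) ^ 2 * ((1 : Matrix (Fin (d a)) (Fin (d a)) ℝ) i j) ^ 2
          + (2 * (H0 / k) * Real.sqrt (d a))
              * ((1 : Matrix (Fin (d a)) (Fin (d a)) ℝ) i j * H a i j)
          + Real.sqrt (d a) ^ 2 * (H a i j) ^ 2 := by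
      intro i j
      rw [hXentry]
      ring
    have hsq : Real.sqrt (d a) ^ 2 = (d a : ℝ) := Real.sq_sqrt (Nat.cast_nonneg _)
    have hfrobsq : (frobeniusNorm (H a)) ^ 2 = ∑ i, ∑ j, (H a i j) ^ 2 := by
      rw [frobeniusNorm, Real.sq_sqrt (by positivity)]
    have hS : (∑ i, ∑ j, (X i j) ^ 2)
        = (d a : ℝ) * ((H0 / k) ^ 2 + (frobeniusNorm (H a)) ^ 2) := by
      simp_rw [hexp, Finset.sum_add_distrib, ← Finset.mul_sum]
      rw [hone2, hcross, hsq, hfrobsq]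
      ring
    have hcb : (H0 / (k:ℝ)) ^ 2 + (frobeniusNorm (H a)) ^ 2 ≤ δ ^ 2 := by
      have h1 : (H0 / (k:ℝ)) ^ 2 ≤ H0 ^ 2 := by
        rw [div_pow]
        apply div_le_self (sq_nonneg _)
        have hk1 : (1:ℝ) ≤ (k:ℝ) := by exact_mod_cast hk
        nlinarith
      have h2 : (frobeniusNorm (H a)) ^ 2 ≤ ∑ b, (frobeniusNorm (H b)) ^ 2 :=
        Finset.single_le_sum (f := fun b => (frobeniusNorm (H b)) ^ 2)
          (fun b _ => sq_nonneg _) (Finset.mem_univ a)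
      linarith
    rw [frobeniusNorm, hS]
    calc Real.sqrt ((d a : ℝ) * ((H0 / k) ^ 2 + (frobeniusNorm (H a)) ^ 2))
        ≤ Real.sqrt ((d a : ℝ) * δ ^ 2) := by
          apply Real.sqrt_le_sqrt
          have : (0:ℝ) ≤ (d a : ℝ) := Nat.cast_nonneg _
          nlinarith
      _ = Real.sqrt (d a) * δ := by
          rw [Real.sqrt_mul (Nat.cast_nonneg _), Real.sqrt_sq hδ0]
  have hsd1 : ∀ a, Real.sqrt (d a) * δ ≤ 1 := by
    intro a
    rcases Nat.eq_zero_or_pos (d a) with h0 | hpos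
    · rw [h0]
      simp
    · have hs : 0 < Real.sqrt (d a) := Real.sqrt_pos.mpr (by exact_mod_cast hpos)
      have h1 := mul_le_mul_of_nonneg_left (hδ a) hs.le
      calc Real.sqrt (d a) * δ ≤ Real.sqrt (d a) * (1 / Real.sqrt (d a)) := h1
        _ = 1 := by field_simp
  have part1 : ∀ a, frobeniusNorm (1 - Θhat a) ≤ 2 * Real.sqrt (d a) * δ := by
    intro a
    rw [hΘ a]
    calc frobeniusNorm (1 - NormedSpace.exp _)
        ≤ 2 * frobeniusNorm ((H0 / k) • (1 : Matrix (Fin (d a)) (Fin (d a)) ℝ)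
            + Real.sqrt (d a) • H a) :=
          stmt8_main1 _ ((hXfrob a).trans (hsd1 a))
      _ ≤ 2 * (Real.sqrt (d a) * δ) := by
          have := hXfrob a
          linarith
      _ = 2 * Real.sqrt (d a) * δ := by ring
  refine ⟨part1, ?_⟩
  -- Part 2
  have hfrob1 : ∀ b : Fin k, frobeniusNorm (Θhat b) ≤ Real.sqrt (d b) * (1 + 2 * δ) := by
    intro b
    have h1 := part1 b
    have h2 : frobeniusNorm (Θhat b)
        = frobeniusNorm ((1 : Matrix (Fin (d b)) (Fin (d b)) ℝ) + -(1 - Θhat b)) := by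
      congr 1
      abel
    rw [h2]
    have h3 := stmt8_frob_triangle (1 : Matrix (Fin (d b)) (Fin (d b)) ℝ) (-(1 - Θhat b))
    have h4 : frobeniusNorm (-(1 - Θhat b)) = frobeniusNorm (1 - Θhat b) := by
      have : -(1 - Θhat b) = Θhat b - 1 := by abel
      rw [this, stmt8_frob_sub_rev]
    rw [h4, stmt8_frob_one] at h3
    refine h3.trans ?_
    have := Real.sqrt_nonneg ((d b : ℕ) : ℝ)
    nlinarith
  set C := ∏ b, Real.sqrt ((d b : ℕ) : ℝ) with hC
  have hC0 : 0 ≤ C := Finset.prod_nonneg fun b _ => Real.sqrt_nonneg _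
  set E := 2 * δ * (1 + 2 * δ) ^ (k - 1) * C with hE
  have hFb : ∀ (s : Finset (Fin k)) (b : Fin k),
      frobeniusNorm (if b ∈ s then Θhat b else 1) ≤ Real.sqrt (d b) * (1 + 2 * δ) := by
    intro s b
    split_ifs with hb
    · exact hfrob1 b
    · rw [stmt8_frob_one]
      nlinarith [Real.sqrt_nonneg ((d b : ℕ) : ℝ)]
  have main : ∀ s : Finset (Fin k),
      frobeniusNorm (kron d (fun b => if b ∈ s then Θhat b else 1) - 1) ≤ s.card * E := by
    intro s
    induction s using Finset.induction_on with
    | empty =>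
        have h0 : (fun b : Fin k => if b ∈ (∅ : Finset (Fin k)) then Θhat b else 1)
            = fun _ => (1 : Matrix _ _ ℝ) := by
          funext b; simp
        rw [h0, stmt8_kron_one, sub_self]
        simp [frobeniusNorm]
    | @insert a s ha ih =>
        have hupd : (fun b => if b ∈ insert a s then Θhat b else 1)
            = Function.update
                (fun b => if b ∈ s then Θhat b else (1 : Matrix (Fin (d b)) (Fin (d b)) ℝ))
                a (Θhat a) := by
          funext b
          by_cases hb : b = a
          · subst hb; simp
          · simp [Function.update_of_ne hb, Finset.mem_insert, hb]
        have hFs1 : Function.update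
              (fun b => if b ∈ s then Θhat b else (1 : Matrix (Fin (d b)) (Fin (d b)) ℝ)) a 1
            = fun b => if b ∈ s then Θhat b else 1 := by
          funext b
          by_cases hb : b = a
          · subst hb; simp [ha]
          · rw [Function.update_of_ne hb]
        have hdecomp : kron d (fun b => if b ∈ insert a s then Θhat b else 1)
            = kron d (Function.update (fun b => if b ∈ s then Θhat b else 1) a (Θhat a - 1))
              + kron d (fun b => if b ∈ s then Θhat b else 1) := by
          have hstep := stmt8_kron_update_add
            (fun b => if b ∈ s then Θhat b else (1 : Matrix (Fin (d b)) (Fin (d b)) ℝ))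
            a (Θhat a - 1) 1
          rw [hFs1] at hstep
          have e : Θhat a - 1 + 1 = Θhat a := by abel
          rw [e] at hstep
          rw [hupd, hstep]
        have hnn : (0:ℝ) ≤ 2 * Real.sqrt (d a) * δ :=
          mul_nonneg (mul_nonneg (by norm_num) (Real.sqrt_nonneg _)) hδ0
        have hfirst : frobeniusNorm
            (kron d (Function.update (fun b => if b ∈ s then Θhat b else 1) a (Θhat a - 1)))
            ≤ E := by
          rw [stmt8_frob_kron, ← Finset.mul_prod_erase _ _ (Finset.mem_univ a)]
          have h1 : frobeniusNorm (Function.update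
                (fun b => if b ∈ s then Θhat b else (1 : Matrix (Fin (d b)) (Fin (d b)) ℝ))
                a (Θhat a - 1) a) ≤ 2 * Real.sqrt (d a) * δ := by
            rw [Function.update_self, stmt8_frob_sub_rev]
            exact part1 a
          have h2 : (∏ b ∈ Finset.univ.erase a, frobeniusNorm (Function.update
                (fun b => if b ∈ s then Θhat b else (1 : Matrix (Fin (d b)) (Fin (d b)) ℝ))
                a (Θhat a - 1) b))
              ≤ ∏ b ∈ Finset.univ.erase a, (Real.sqrt ((d b : ℕ) : ℝ) * (1 + 2 * δ)) := by
            refine Finset.prod_le_prod (fun b _ => stmt8_frob_nonneg _) fun b hb => ?_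
            rw [Function.update_of_ne (Finset.ne_of_mem_erase hb)]
            exact hFb s b
          have h3 : (∏ b ∈ Finset.univ.erase a, (Real.sqrt ((d b : ℕ) : ℝ) * (1 + 2 * δ)))
              = (∏ b ∈ Finset.univ.erase a, Real.sqrt ((d b : ℕ) : ℝ))
                  * (1 + 2 * δ) ^ (k - 1) := by
            rw [Finset.prod_mul_distrib, Finset.prod_const,
              Finset.card_erase_of_mem (Finset.mem_univ a), Finset.card_univ, Fintype.card_fin]
          have h4 := mul_le_mul h1 (h2.trans (le_of_eq h3))
            (Finset.prod_nonneg fun b _ => stmt8_frob_nonneg _) hnn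
          refine h4.trans (le_of_eq ?_)
          rw [hE, hC, ← Finset.mul_prod_erase Finset.univ
            (fun b => Real.sqrt ((d b : ℕ) : ℝ)) (Finset.mem_univ a)]
          ring
        have hsplit : frobeniusNorm (kron d (fun b => if b ∈ insert a s then Θhat b else 1) - 1)
            ≤ frobeniusNorm
                (kron d (Function.update (fun b => if b ∈ s then Θhat b else 1) a (Θhat a - 1)))
              + frobeniusNorm (kron d (fun b => if b ∈ s then Θhat b else 1) - 1) := by
          rw [hdecomp, add_sub_assoc]
          exact stmt8_frob_triangle _ _
        refine hsplit.trans ?_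
        have := add_le_add hfirst ih
        refine this.trans (le_of_eq ?_)
        rw [Finset.card_insert_of_notMem ha]
        push_cast
        ring
  have huniv : (fun b : Fin k => if b ∈ (Finset.univ : Finset (Fin k)) then Θhat b else 1)
      = Θhat := by
    funext b; simp
  have h := main Finset.univ
  rw [huniv, Finset.card_univ, Fintype.card_fin] at h
  rw [stmt8_frob_sub_rev]
  refine h.trans ?_
  have hCD : C = Real.sqrt ((∏ a, d a : ℕ) : ℝ) := by
    rw [hC, ← stmt8_sqrt_prod Finset.univ (fun b => ((d b : ℕ) : ℝ))
      (fun i _ => Nat.cast_nonneg _)]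
    congr 1
    push_cast
    rfl
  have hpow : (1 + 2 * δ) ^ (k - 1) ≤ Real.exp (2 * k * δ) := by
    have h1 : (1 + 2 * δ) ≤ Real.exp (2 * δ) := by
      have := Real.add_one_le_exp (2 * δ)
      linarith
    calc (1 + 2 * δ) ^ (k - 1) ≤ (Real.exp (2 * δ)) ^ (k - 1) :=
          pow_le_pow_left₀ (by linarith) h1 _
      _ = Real.exp (((k - 1 : ℕ) : ℝ) * (2 * δ)) := (Real.exp_nat_mul _ _).symm
      _ ≤ Real.exp (2 * k * δ) := by
          apply Real.exp_le_exp.mpr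
          have hk1 : ((k - 1 : ℕ) : ℝ) ≤ (k : ℝ) := by exact_mod_cast Nat.sub_le k 1
          nlinarith
  have hkC : (0:ℝ) ≤ 2 * (k : ℝ) * C * δ :=
    mul_nonneg (mul_nonneg (mul_nonneg (by norm_num) (Nat.cast_nonneg k)) hC0) hδ0
  calc (k : ℝ) * E = 2 * (k : ℝ) * C * δ * (1 + 2 * δ) ^ (k - 1) := by rw [hE]; ring
    _ ≤ 2 * (k : ℝ) * C * δ * Real.exp (2 * k * δ) := mul_le_mul_of_nonneg_left hpow hkC
    _ = 2 * k * Real.sqrt ((∏ a, d a : ℕ) : ℝ) * δ * Real.exp (2 * k * δ) := by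
        rw [hCD]
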